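/- Let (x_n) be Fejér monotone with respect to a nonempty closed convex set C in a real Hilbert space. If every weak cluster point of (x_n) belongs to C, then (x_n) converges weakly to the strong limit of the shadow sequence (P_C x_n). -/

import Mathlib

open Filter Topology RealInnerProductSpace

/-- Sequential weak compactness for a bounded sequence lying in the closed span of the
range of a sequence. -/
private lemma weak_subseq_aux {X : Type*} [NormedAddCommGroup X] [InnerProductSpace ℝ X]
    [CompleteSpace X] (x : ℕ → X) (M : ℝ)
    (y : ℕ → X) (hM : ∀ n, ‖y n‖ ≤ M)
    (hmem : ∀ n, y n ∈ (Submodule.span ℝ (Set.range x)).topologicalClosure) :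
    ∃ w : X, ∃ ms : ℕ → ℕ, StrictMono ms ∧
      ∀ u : X, Tendsto (fun n => ⟪y (ms n), u⟫) atTop (𝓝 ⟪w, u⟫) := by
  have hM0 : (0:ℝ) ≤ M := le_trans (norm_nonneg _) (hM 0)
  -- diagonal extraction via compactness of a product of intervals
  set K : Set (ℕ → ℝ) := Set.univ.pi fun m => Set.Icc (-(M * ‖x m‖)) (M * ‖x m‖) with hK
  have hKc : IsCompact K := isCompact_univ_pi fun m => isCompact_Icc
  have hmemK : ∀ n, (fun m => ⟪y n, x m⟫) ∈ K := by
    intro n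
    intro m _
    have h1 : |⟪y n, x m⟫| ≤ M * ‖x m‖ :=
      le_trans (abs_real_inner_le_norm _ _)
        (mul_le_mul_of_nonneg_right (hM n) (norm_nonneg _))
    exact abs_le.mp h1
  obtain ⟨L, -, ms, hms, hLms⟩ := hKc.tendsto_subseq hmemK
  set z : ℕ → X := fun n => y (ms n) with hz
  have hzM : ∀ n, ‖z n‖ ≤ M := fun n => hM _
  have hconv0 : ∀ m, Tendsto (fun n => ⟪z n, x m⟫) atTop (𝓝 (L m)) := by
    intro m
    exact (tendsto_pi_nhds.mp hLms m)
  set Y := (Submodule.span ℝ (Set.range x)).topologicalClosure with hYdef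
  have hzY : ∀ n, z n ∈ Y := fun n => hmem _
  have hspan : ∀ u ∈ Submodule.span ℝ (Set.range x),
      ∃ l, Tendsto (fun n => ⟪z n, u⟫) atTop (𝓝 l) := by
    intro u hu
    induction hu using Submodule.span_induction with
    | mem v hv => obtain ⟨m, rfl⟩ := hv; exact ⟨L m, hconv0 m⟩
    | zero => exact ⟨0, by simp⟩
    | add v v' _ _ ih ih' =>
        obtain ⟨l, hl⟩ := ih; obtain ⟨l', hl'⟩ := ih'
        exact ⟨l + l', by simpa [inner_add_right] using hl.add hl'⟩
    | smul a v _ ih =>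
        obtain ⟨l, hl⟩ := ih
        exact ⟨a * l, by simpa [inner_smul_right] using hl.const_mul a⟩
  have hYall : ∀ u ∈ Y, ∃ l, Tendsto (fun n => ⟪z n, u⟫) atTop (𝓝 l) := by
    intro u hu
    have hc : CauchySeq fun n => ⟪z n, u⟫ := by
      rw [Metric.cauchySeq_iff]
      intro ε hε
      have hM1 : (0:ℝ) < M + 1 := by linarith
      have hε' : 0 < ε / (3 * (M + 1)) := by positivity
      have hu' : u ∈ closure ((Submodule.span ℝ (Set.range x) : Submodule ℝ X) : Set X) := by
        rw [← Submodule.topologicalClosure_coe]; exact hu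
      obtain ⟨u', hu'S, hdu⟩ := Metric.mem_closure_iff.mp hu' _ hε'
      obtain ⟨l, hl⟩ := hspan u' hu'S
      obtain ⟨N, hN⟩ := Metric.cauchySeq_iff.mp hl.cauchySeq (ε/3) (by positivity)
      refine ⟨N, fun m hm n hn => ?_⟩
      have key : ∀ k, dist (⟪z k, u⟫) (⟪z k, u'⟫) < ε/3 := by
        intro k
        have h1 : dist (⟪z k, u⟫) (⟪z k, u'⟫) ≤ (M+1) * dist u u' := by
          rw [Real.dist_eq, ← inner_sub_right, dist_eq_norm]
          calc |⟪z k, u - u'⟫| ≤ ‖z k‖ * ‖u - u'‖ := abs_real_inner_le_norm _ _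
            _ ≤ (M+1) * ‖u - u'‖ :=
              mul_le_mul_of_nonneg_right (by linarith [hzM k]) (norm_nonneg _)
        have h2 : (M+1) * dist u u' < (M+1) * (ε / (3*(M+1))) :=
          (mul_lt_mul_iff_right₀ hM1).mpr hdu
        have h3 : (M+1) * (ε / (3*(M+1))) = ε/3 := by field_simp
        linarith
      calc dist (⟪z m, u⟫) (⟪z n, u⟫)
          ≤ dist (⟪z m, u⟫) (⟪z m, u'⟫) + dist (⟪z m, u'⟫) (⟪z n, u'⟫)
            + dist (⟪z n, u'⟫) (⟪z n, u⟫) := dist_triangle4 _ _ _ _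
        _ < ε/3 + ε/3 + ε/3 := by
            have h1 := key m
            have h2 := hN m hm n hn
            have h3 := key n
            rw [dist_comm (⟪z n, u'⟫) (⟪z n, u⟫)]
            linarith
        _ = ε := by ring
    exact cauchySeq_tendsto_of_complete hc
  haveI : CompleteSpace Y := (Submodule.isClosed_topologicalClosure _).completeSpace_coe
  have hall : ∀ u : X, ∃ l, Tendsto (fun n => ⟪z n, u⟫) atTop (𝓝 l) := by
    intro u
    obtain ⟨l, hl⟩ := hYall (Y.orthogonalProjectionOnto u : X) (Y.orthogonalProjectionOnto u).2
    refine ⟨l, hl.congr fun n => ?_⟩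
    have hperp := Y.sub_starProjection_mem_orthogonal u
    have h0 : ⟪z n, u - (Y.orthogonalProjectionOnto u : X)⟫ = 0 :=
      (Submodule.mem_orthogonal Y _).mp hperp (z n) (hzY n)
    rw [inner_sub_right] at h0
    linarith
  choose lim hlim using hall
  have hadd : ∀ u v, lim (u + v) = lim u + lim v := fun u v =>
    tendsto_nhds_unique (hlim (u+v)) (by simpa [inner_add_right] using (hlim u).add (hlim v))
  have hsmul : ∀ (a : ℝ) (u : X), lim (a • u) = a * lim u := fun a u =>
    tendsto_nhds_unique (hlim (a • u)) (by simpa [inner_smul_right] using (hlim u).const_mul a)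
  have hbound : ∀ u, ‖lim u‖ ≤ M * ‖u‖ := by
    intro u
    refine le_of_tendsto (hlim u).norm (Eventually.of_forall fun n => ?_)
    calc ‖⟪z n, u⟫‖ = |⟪z n, u⟫| := Real.norm_eq_abs _
      _ ≤ ‖z n‖ * ‖u‖ := abs_real_inner_le_norm _ _
      _ ≤ M * ‖u‖ := mul_le_mul_of_nonneg_right (hzM n) (norm_nonneg _)
  let F : X →L[ℝ] ℝ := LinearMap.mkContinuous
    { toFun := lim, map_add' := hadd, map_smul' := hsmul } M hbound
  refine ⟨(InnerProductSpace.toDual ℝ X).symm F, ms, hms, fun u => ?_⟩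
  have hw : ⟪(InnerProductSpace.toDual ℝ X).symm F, u⟫ = F u :=
    InnerProductSpace.toDual_symm_apply
  rw [hw]
  exact hlim u

theorem fejer_weak_cluster_in_C_weak_conv {X : Type*} [NormedAddCommGroup X]
    [InnerProductSpace ℝ X] [CompleteSpace X]
    (C : Set X) (hCne : C.Nonempty) (hCcl : IsClosed C) (hCcv : Convex ℝ C)
    (P : X → X) (hP : ∀ z : X, P z ∈ C ∧ ∀ c ∈ C, ‖z - P z‖ ≤ ‖z - c‖)
    (x : ℕ → X) (hFej : ∀ c ∈ C, ∀ n : ℕ, ‖x (n + 1) - c‖ ≤ ‖x n - c‖)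
    (hcluster : ∀ w : X, (∃ φ : ℕ → ℕ, StrictMono φ ∧
        ∀ u : X, Tendsto (fun n => ⟪x (φ n), u⟫) atTop (𝓝 ⟪w, u⟫)) → w ∈ C) :
    ∃ p ∈ C, Tendsto (fun n => P (x n)) atTop (𝓝 p) ∧
      ∀ u : X, Tendsto (fun n => ⟪x n, u⟫) atTop (𝓝 ⟪p, u⟫) := by
  obtain ⟨c0, hc0⟩ := hCne
  have hPmem : ∀ z, P z ∈ C := fun z => (hP z).1
  -- variational characterization of the projection
  haveI : Nonempty C := ⟨⟨c0, hc0⟩⟩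
  have hkey : ∀ z : X, ∀ c ∈ C, ⟪z - P z, c - P z⟫ ≤ 0 := by
    intro z
    have hinf : ‖z - P z‖ = ⨅ w : C, ‖z - (w : X)‖ := by
      refine le_antisymm (le_ciInf fun w => (hP z).2 w w.2) ?_
      have hbdd : BddBelow (Set.range fun w : C => ‖z - (w:X)‖) :=
        ⟨0, by rintro b ⟨w, rfl⟩; exact norm_nonneg _⟩
      exact ciInf_le hbdd ⟨P z, hPmem z⟩
    exact (norm_eq_iInf_iff_real_inner_le_zero hCcv (hPmem z)).mp hinf
  have hAnti : ∀ c ∈ C, Antitone fun n => ‖x n - c‖ := fun c hc =>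
    antitone_nat_of_succ_le fun n => hFej c hc n
  set M : ℝ := ‖x 0 - c0‖ + ‖c0‖ with hMdef
  have hxM : ∀ n, ‖x n‖ ≤ M := by
    intro n
    calc ‖x n‖ = ‖(x n - c0) + c0‖ := by rw [sub_add_cancel]
      _ ≤ ‖x n - c0‖ + ‖c0‖ := norm_add_le _ _
      _ ≤ M := add_le_add_left (hAnti c0 hc0 (Nat.zero_le n)) _
  -- the distance to C along the sequence
  set d : ℕ → ℝ := fun n => ‖x n - P (x n)‖ with hd
  have hdnn : ∀ n, 0 ≤ d n := fun n => norm_nonneg _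
  have hdanti : Antitone d := antitone_nat_of_succ_le (fun n => by
    calc d (n+1) ≤ ‖x (n+1) - P (x n)‖ := (hP (x (n+1))).2 _ (hPmem (x n))
      _ ≤ ‖x n - P (x n)‖ := hFej _ (hPmem (x n)) n)
  obtain ⟨δ, hδ⟩ : ∃ δ, Tendsto d atTop (𝓝 δ) :=
    ⟨_, tendsto_atTop_ciInf hdanti ⟨0, by rintro b ⟨n, rfl⟩; exact hdnn n⟩⟩
  have hδle : ∀ n, δ ≤ d n := fun n => hdanti.le_of_tendsto hδ n
  have hδnn : 0 ≤ δ := ge_of_tendsto hδ (Eventually.of_forall hdnn)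
  -- shadows are Cauchy
  have hshadow : ∀ n m, n ≤ m → ‖P (x m) - P (x n)‖^2 ≤ d n ^2 - d m ^2 := by
    intro n m hnm
    have h1 : ‖x m - P (x n)‖ ≤ d n := hAnti _ (hPmem (x n)) hnm
    have h1' : ‖x m - P (x n)‖^2 ≤ d n ^2 := by
      have := pow_le_pow_left₀ (norm_nonneg _) h1 2
      simpa using this
    have h2 : ⟪x m - P (x m), P (x n) - P (x m)⟫ ≤ 0 := hkey (x m) _ (hPmem (x n))
    have h2' : 0 ≤ ⟪x m - P (x m), P (x m) - P (x n)⟫ := by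
      rw [show P (x m) - P (x n) = -(P (x n) - P (x m)) by abel, inner_neg_right]
      linarith
    have hexp : ‖x m - P (x n)‖^2
        = d m ^2 + 2*⟪x m - P (x m), P (x m) - P (x n)⟫ + ‖P (x m) - P (x n)‖^2 := by
      rw [show x m - P (x n) = (x m - P (x m)) + (P (x m) - P (x n)) by abel,
        norm_add_sq_real]
    linarith
  have hbd : ∀ N n m, N ≤ n → n ≤ m → ‖P (x m) - P (x n)‖ ≤ Real.sqrt (d N ^2 - δ^2) := by
    intro N n m hNn hnm
    have h := hshadow n m hnm
    have hsq : ‖P (x m) - P (x n)‖^2 ≤ d N ^2 - δ^2 := by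
      have h1 : d n ^2 ≤ d N ^2 := pow_le_pow_left₀ (hdnn n) (hdanti hNn) 2
      have h2 : δ^2 ≤ d m ^2 := pow_le_pow_left₀ hδnn (hδle m) 2
      linarith
    calc ‖P (x m) - P (x n)‖ = Real.sqrt (‖P (x m) - P (x n)‖^2) :=
        (Real.sqrt_sq (norm_nonneg _)).symm
      _ ≤ Real.sqrt (d N ^2 - δ^2) := Real.sqrt_le_sqrt hsq
  have hcauchy : CauchySeq fun n => P (x n) := by
    refine cauchySeq_of_le_tendsto_0 (fun N => Real.sqrt (d N ^2 - δ^2)) ?_ ?_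
    · intro m n N hm hn
      rw [dist_eq_norm]
      rcases le_total n m with h | h
      · exact hbd N n m hn h
      · rw [norm_sub_rev]; exact hbd N m n hm h
    · have h0 : Tendsto (fun N => d N ^2 - δ^2) atTop (𝓝 (δ^2 - δ^2)) :=
        (hδ.pow 2).sub_const _
      have h1 : Tendsto (fun N => Real.sqrt (d N ^2 - δ^2)) atTop (𝓝 (Real.sqrt (δ^2 - δ^2))) :=
        h0.sqrt
      simpa using h1
  obtain ⟨p, hp⟩ := cauchySeq_tendsto_of_complete hcauchy
  have hpC : p ∈ C := hCcl.mem_of_tendsto hp (Eventually.of_forall fun n => hPmem _)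
  refine ⟨p, hpC, hp, fun u => ?_⟩
  apply tendsto_of_subseq_tendsto
  intro ns hns
  obtain ⟨φ₀, hφ₀, hnsφ⟩ := strictMono_subseq_of_tendsto_atTop hns
  set ψ : ℕ → ℕ := ns ∘ φ₀ with hψ
  have hmem : ∀ n, x (ψ n) ∈ (Submodule.span ℝ (Set.range x)).topologicalClosure := fun n =>
    Submodule.le_topologicalClosure _ (Submodule.subset_span ⟨ψ n, rfl⟩)
  obtain ⟨w, ms, hmsmono, hW⟩ := weak_subseq_aux x M (fun n => x (ψ n)) (fun n => hxM _) hmem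
  set φ : ℕ → ℕ := fun n => ψ (ms n) with hφdef
  have hφ : StrictMono φ := hnsφ.comp hmsmono
  have hwC : w ∈ C := hcluster w ⟨φ, hφ, fun u => hW u⟩
  have hpz : Tendsto (fun n => P (x (φ n))) atTop (𝓝 p) := hp.comp hφ.tendsto_atTop
  have hzero : Tendsto (fun n => ⟪x (φ n), P (x (φ n)) - p⟫) atTop (𝓝 0) := by
    have hb : ∀ n, ‖⟪x (φ n), P (x (φ n)) - p⟫‖ ≤ M * ‖P (x (φ n)) - p‖ := by
      intro n
      calc ‖⟪x (φ n), P (x (φ n)) - p⟫‖ = |⟪x (φ n), P (x (φ n)) - p⟫| := Real.norm_eq_abs _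
        _ ≤ ‖x (φ n)‖ * ‖P (x (φ n)) - p‖ := abs_real_inner_le_norm _ _
        _ ≤ M * ‖P (x (φ n)) - p‖ := mul_le_mul_of_nonneg_right (hxM _) (norm_nonneg _)
    refine squeeze_zero_norm hb ?_
    have h0 : Tendsto (fun n => P (x (φ n)) - p) atTop (𝓝 (p - p)) := hpz.sub_const p
    have h1 : Tendsto (fun n => ‖P (x (φ n)) - p‖) atTop (𝓝 ‖p - p‖) := h0.norm
    have h2 := h1.const_mul M
    simpa using h2
  have hA : Tendsto (fun n => ⟪x (φ n), P (x (φ n))⟫) atTop (𝓝 ⟪w, p⟫) := by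
    have h := hzero.add (hW p)
    have heq : ∀ n, ⟪x (φ n), P (x (φ n)) - p⟫ + ⟪x (φ n), p⟫ = ⟪x (φ n), P (x (φ n))⟫ := by
      intro n; rw [inner_sub_right]; ring
    rw [show (0:ℝ) + ⟪w, p⟫ = ⟪w, p⟫ by ring] at h
    exact h.congr heq
  have hB : Tendsto (fun n => ⟪x (φ n) - P (x (φ n)), w - P (x (φ n))⟫) atTop
      (𝓝 ((⟪w,w⟫ - ⟪w,p⟫) - (⟪p,w⟫ - ⟪p,p⟫))) := by
    have h1 := hW w
    have h2 : Tendsto (fun n => ⟪P (x (φ n)), w⟫) atTop (𝓝 (⟪p, w⟫)) :=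
      hpz.inner tendsto_const_nhds
    have h3 : Tendsto (fun n => ⟪P (x (φ n)), P (x (φ n))⟫) atTop (𝓝 (⟪p, p⟫)) :=
      hpz.inner hpz
    have h := (h1.sub hA).sub (h2.sub h3)
    refine h.congr fun n => ?_
    rw [inner_sub_left, inner_sub_right, inner_sub_right]
  have hle : (⟪w,w⟫ - ⟪w,p⟫) - (⟪p,w⟫ - ⟪p,p⟫) ≤ 0 :=
    le_of_tendsto hB (Eventually.of_forall fun n => hkey _ _ hwC)
  have hwp : w = p := by
    have hexp : ⟪w - p, w - p⟫ = (⟪w,w⟫ - ⟪w,p⟫) - (⟪p,w⟫ - ⟪p,p⟫) := by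
      rw [inner_sub_left, inner_sub_right, inner_sub_right]
    have h0 : ⟪w - p, w - p⟫ ≤ 0 := by rw [hexp]; exact hle
    exact sub_eq_zero.mp (real_inner_self_nonpos.mp h0)
  refine ⟨φ₀ ∘ ms, ?_⟩
  have := hW u
  rw [hwp] at this
  exact this
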